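/- arXiv:2603.08598 — 2 statements merged into one kernel-verified Lean document; each statement's English description precedes it below -/
import Mathlib

section
/- Let s : ℕ → ℝ be a positive sequence with s(n) → ∞ and s(n)/log(s(n)) ~ √n as n → ∞ (ratio tends to 1). Then s(n) ~ (1/2)·√n·log n, i.e., s(n) / ((1/2)√n log n) → 1. -/
open Filter Real

theorem stmt_12 (s : ℕ → ℝ) (hpos : ∀ᶠ n in Filter.atTop, 0 < s n)
    (hinf : Filter.Tendsto s Filter.atTop Filter.atTop)
    (h : Filter.Tendsto (fun n : ℕ => s n / (Real.log (s n) * Real.sqrt n))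
      Filter.atTop (nhds 1)) :
    Filter.Tendsto (fun n : ℕ => s n / ((1 / 2) * Real.sqrt n * Real.log n))
      Filter.atTop (nhds 1) := by
  set r : ℕ → ℝ := fun n => s n / (Real.log (s n) * Real.sqrt n) with hr
  have hlogs : Tendsto (fun n => Real.log (s n)) atTop atTop :=
    Real.tendsto_log_atTop.comp hinf
  have hlogs_pos : ∀ᶠ n in atTop, 0 < Real.log (s n) := hlogs.eventually_gt_atTop 0
  have hrpos : ∀ᶠ n in atTop, 0 < r n :=
    h.eventually (eventually_gt_nhds (by norm_num : (0:ℝ) < 1))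
  have key : ∀ᶠ n in atTop, Real.log (s n)
      = Real.log (r n) + Real.log (Real.log (s n)) + Real.log n / 2 := by
    filter_upwards [hrpos, hlogs_pos, hpos, eventually_ge_atTop 1] with n h1 h2 h3 h4
    have hn0 : (0:ℝ) < (n : ℝ) := by exact_mod_cast h4
    have hsq : 0 < Real.sqrt n := Real.sqrt_pos.mpr hn0
    have hs : s n = r n * (Real.log (s n) * Real.sqrt n) := by
      rw [hr]; field_simp
    calc Real.log (s n) = Real.log (r n * (Real.log (s n) * Real.sqrt n)) := by
          rw [← hs]
      _ = Real.log (r n) + Real.log (Real.log (s n)) + Real.log n / 2 := by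
          rw [Real.log_mul h1.ne' (by positivity), Real.log_mul h2.ne' hsq.ne',
            Real.log_sqrt (le_of_lt hn0)]
          ring
  have ha : Tendsto (fun n => Real.log (r n)) atTop (nhds 0) := by
    have := (Real.continuousAt_log one_ne_zero).tendsto.comp h
    simpa [Function.comp_def] using this
  have hb : Tendsto (fun n => (Real.log (s n))⁻¹) atTop (nhds 0) :=
    hlogs.inv_tendsto_atTop
  have hc : Tendsto (fun n => Real.log (Real.log (s n)) / Real.log (s n)) atTop (nhds 0) := by
    have h0 := Real.isLittleO_log_id_atTop.tendsto_div_nhds_zero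
    exact h0.comp hlogs
  have h1 : Tendsto (fun n : ℕ => Real.log n / (2 * Real.log (s n))) atTop (nhds 1) := by
    have hlim : Tendsto (fun n => 1 - Real.log (r n) * (Real.log (s n))⁻¹
        - Real.log (Real.log (s n)) / Real.log (s n)) atTop (nhds 1) := by
      have hone : Tendsto (fun _ : ℕ => (1:ℝ)) atTop (nhds 1) := tendsto_const_nhds
      have := (hone.sub (ha.mul hb)).sub hc
      simpa using this
    refine hlim.congr' ?_
    filter_upwards [key, hlogs_pos] with n hk hp
    have hk' : Real.log n = 2 * (Real.log (s n) - Real.log (r n)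
        - Real.log (Real.log (s n))) := by linarith
    rw [hk']
    field_simp
  have h2 : Tendsto (fun n : ℕ => 2 * Real.log (s n) / Real.log n) atTop (nhds 1) := by
    have := h1.inv₀ one_ne_zero
    simpa [inv_div] using this
  have heq : ∀ᶠ n in atTop, r n * (2 * Real.log (s n) / Real.log n)
      = s n / ((1 / 2) * Real.sqrt n * Real.log n) := by
    filter_upwards [hlogs_pos, eventually_ge_atTop 2] with n hp hn
    have hn1 : (1:ℝ) < (n : ℝ) := by exact_mod_cast hn
    have hlogn : 0 < Real.log n := Real.log_pos hn1
    have hsq : 0 < Real.sqrt n := Real.sqrt_pos.mpr (by linarith)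
    rw [hr]
    field_simp
  have := (h.mul h2).congr' heq
  simpa using this
end

section
/- Let s : ℕ → ℝ be a positive sequence with s(n) → ∞ and (s(n)/log s(n))^m ~ n as n → ∞, where m ≥ 1 is a fixed integer. Then s(n) ~ (1/m)·n^{1/m}·log n. -/
open Filter Real

theorem stmt_13 (m : ℕ) (hm : 1 ≤ m) (s : ℕ → ℝ) (hpos : ∀ᶠ n in Filter.atTop, 0 < s n)
    (hinf : Filter.Tendsto s Filter.atTop Filter.atTop)
    (h : Filter.Tendsto (fun n : ℕ => (s n) ^ m / ((Real.log (s n)) ^ m * n))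
      Filter.atTop (nhds 1)) :
    Filter.Tendsto
      (fun n : ℕ => s n / ((1 / (m : ℝ)) * (n : ℝ) ^ ((1 : ℝ) / m) * Real.log n))
      Filter.atTop (nhds 1) := by
  have hmR : (0:ℝ) < m := by exact_mod_cast Nat.lt_of_lt_of_le Nat.zero_lt_one hm
  have hm0 : (m : ℝ) ≠ 0 := ne_of_gt hmR
  set t : ℕ → ℝ := fun n => s n / Real.log (s n) with ht
  have hlogs : Tendsto (fun n => Real.log (s n)) atTop atTop :=
    Real.tendsto_log_atTop.comp hinf
  -- basic eventual facts
  have hE : ∀ᶠ n : ℕ in atTop, 0 < s n ∧ 1 < Real.log (s n) ∧ 2 ≤ n := by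
    filter_upwards [hpos, hlogs.eventually_gt_atTop 1, eventually_ge_atTop 2] with n h1 h2 h3
    exact ⟨h1, h2, h3⟩
  -- step 1 : (t n)^m / n → 1
  have h1 : Tendsto (fun n : ℕ => (t n) ^ m / n) atTop (nhds 1) := by
    refine h.congr (fun n => ?_)
    simp only [ht, div_pow, div_div]
  -- step 2 : t n / n^(1/m) → 1
  have h2 : Tendsto (fun n : ℕ => t n / (n : ℝ) ^ ((1:ℝ)/m)) atTop (nhds 1) := by
    have := h1.rpow_const (p := (1:ℝ)/m) (Or.inl one_ne_zero)
    rw [Real.one_rpow] at this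
    refine this.congr' ?_
    filter_upwards [hE] with n ⟨hs, hls, hn⟩
    have htpos : 0 < t n := div_pos hs (lt_trans one_pos hls)
    have hnpos : (0:ℝ) < n := by positivity
    rw [Real.div_rpow (le_of_lt (pow_pos htpos m)) (le_of_lt hnpos),
      ← Real.rpow_natCast (t n) m, ← Real.rpow_mul (le_of_lt htpos),
      mul_one_div_cancel hm0, Real.rpow_one]
  -- t → atTop
  have hnT : Tendsto (fun n : ℕ => (n : ℝ) ^ ((1:ℝ)/m)) atTop atTop :=
    (tendsto_rpow_atTop (by positivity)).comp tendsto_natCast_atTop_atTop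
  have htT : Tendsto t atTop atTop := by
    have := h2.pos_mul_atTop one_pos hnT
    refine this.congr' ?_
    filter_upwards [hE] with n ⟨hs, hls, hn⟩
    have hnpos : (0:ℝ) < n := by positivity
    field_simp
  have hlogtT : Tendsto (fun n => Real.log (t n)) atTop atTop :=
    Real.tendsto_log_atTop.comp htT
  -- step 3 : log t n - (1/m) log n → 0
  have h3 : Tendsto (fun n : ℕ => Real.log (t n) - 1/m * Real.log n) atTop (nhds 0) := by
    have := (Real.continuousAt_log one_ne_zero).tendsto.comp h2
    rw [Real.log_one] at this
    refine this.congr' ?_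
    filter_upwards [hE, htT.eventually_gt_atTop 0] with n ⟨hs, hls, hn⟩ htpos
    have hnpos : (0:ℝ) < n := by positivity
    simp only [Function.comp_apply]
    rw [Real.log_div (ne_of_gt htpos) (ne_of_gt (Real.rpow_pos_of_pos hnpos _)),
      Real.log_rpow hnpos]
  -- step 4 : (1/m) log n → atTop
  have h4 : Tendsto (fun n : ℕ => 1/m * Real.log n) atTop atTop := by
    have := (h3.neg).add_atTop hlogtT
    refine this.congr (fun n => by ring)
  -- step 5 : log t n / ((1/m) log n) → 1
  have h5 : Tendsto (fun n : ℕ => Real.log (t n) / (1/m * Real.log n)) atTop (nhds 1) := by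
    have hd : Tendsto (fun n : ℕ => (Real.log (t n) - 1/m * Real.log n) / (1/m * Real.log n))
        atTop (nhds 0) := h3.div_atTop h4
    have : Tendsto (fun n : ℕ => 1 + (Real.log (t n) - 1/m * Real.log n) / (1/m * Real.log n))
        atTop (nhds 1) := by simpa using (tendsto_const_nhds.add hd)
    refine this.congr' ?_
    filter_upwards [eventually_ge_atTop 2] with n hn
    have hln : Real.log n ≠ 0 := ne_of_gt (Real.log_pos (by exact_mod_cast hn))
    field_simp
    ring
  -- step 6 : log s / log t → 1
  have h6 : Tendsto (fun n : ℕ => Real.log (s n) / Real.log (t n)) atTop (nhds 1) := by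
    have hsmall : Tendsto (fun n : ℕ => Real.log (Real.log (s n)) / Real.log (s n))
        atTop (nhds 0) :=
      (Real.isLittleO_log_id_atTop.tendsto_div_nhds_zero).comp hlogs
    have hts : Tendsto (fun n : ℕ => Real.log (t n) / Real.log (s n)) atTop (nhds 1) := by
      have : Tendsto (fun n : ℕ => 1 - Real.log (Real.log (s n)) / Real.log (s n))
          atTop (nhds 1) := by simpa using (tendsto_const_nhds.sub hsmall)
      refine this.congr' ?_
      filter_upwards [hE] with n ⟨hs, hls, hn⟩
      have hls0 : Real.log (s n) ≠ 0 := ne_of_gt (lt_trans one_pos hls)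
      rw [ht]
      rw [Real.log_div (ne_of_gt hs) hls0, sub_div, div_self hls0]
    have := hts.inv₀ one_ne_zero
    rw [inv_one] at this
    refine this.congr (fun n => by rw [inv_div])
  -- step 7 : log s / ((1/m) log n) → 1
  have h7 : Tendsto (fun n : ℕ => Real.log (s n) / (1/m * Real.log n)) atTop (nhds 1) := by
    have := h6.mul h5
    rw [mul_one] at this
    refine this.congr' ?_
    filter_upwards [hlogtT.eventually_gt_atTop 0] with n hlt
    rw [div_mul_div_comm, mul_comm (Real.log (s n)), mul_div_mul_left _ _ (ne_of_gt hlt)]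
  -- conclusion
  have := h2.mul h7
  rw [mul_one] at this
  refine this.congr' ?_
  filter_upwards [hE, hlogs.eventually_gt_atTop 0] with n ⟨hs, hls, hn⟩ hls0
  have hnpos : (0:ℝ) < n := by positivity
  have hln : 0 < Real.log n := Real.log_pos (by exact_mod_cast hn)
  have hrp : (0:ℝ) < (n:ℝ) ^ ((1:ℝ)/m) := Real.rpow_pos_of_pos hnpos _
  rw [ht]
  field_simp
end
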